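/- Let 0 < ε < 1/100 and T > 0, let p_1,…,p_n > 0 be job sizes with total size P, and let k be a positive integer with k > ε·P/(2T). Consider any partition of the jobs into bags where each bag i has total size P(i) and is given an allowed size P'(i) ≥ P(i), such that P'(i) ≤ 2T for every bag i and Σ_i P'(i) ≤ P/ε. Then there exists an assignment of the bags to k machines such that on every machine the total allowed size of the bags assigned to it is at most (3/ε²)·T. -/
import Mathlib

/-- List scheduling: weights bounded by `C`, nonnegative, can be assigned to `k`
machines with max load at most average plus `C`. -/
lemma list_sched (k : ℕ) (hk : 0 < k) (C : ℝ) (hC0 : 0 ≤ C) :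
    ∀ (m : ℕ) (w : Fin m → ℝ), (∀ b, 0 ≤ w b) → (∀ b, w b ≤ C) →
    ∃ τ : Fin m → Fin k, ∀ i : Fin k,
      (∑ b ∈ Finset.univ.filter (fun b => τ b = i), w b) ≤ (∑ b, w b) / k + C := by
  intro m
  induction m with
  | zero =>
    intro w _ _
    refine ⟨Fin.elim0, fun i => ?_⟩
    simp [hC0]
  | succ m ih =>
    intro w hw0 hwC
    obtain ⟨τ, hτ⟩ := ih (fun b => w b.castSucc) (fun b => hw0 _) (fun b => hwC _)
    set load : Fin k → ℝ := fun i =>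
      ∑ b ∈ Finset.univ.filter (fun b => τ b = i), w b.castSucc with hload
    have hsum_load : ∑ i, load i = ∑ b : Fin m, w b.castSucc := by
      rw [hload]
      exact Finset.sum_fiberwise _ _ _
    have hkpos : (0 : ℝ) < k := by exact_mod_cast hk
    -- there is a machine with load at most average
    have hmin : ∃ i₀ : Fin k, load i₀ ≤ (∑ b : Fin m, w b.castSucc) / k := by
      by_contra h
      push_neg at h
      have : ∑ i, load i > ∑ i : Fin k, (∑ b : Fin m, w b.castSucc) / k := by
        apply Finset.sum_lt_sum_of_nonempty
        · exact ⟨⟨0, hk⟩, Finset.mem_univ _⟩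
        · intro i _; exact h i
      rw [hsum_load, Finset.sum_const, Finset.card_univ, Fintype.card_fin,
        nsmul_eq_mul] at this
      rw [mul_div_cancel₀ _ (ne_of_gt hkpos)] at this
      exact lt_irrefl _ this
    obtain ⟨i₀, hi₀⟩ := hmin
    refine ⟨Fin.lastCases i₀ τ, fun i => ?_⟩
    have hconv : (∑ b ∈ Finset.univ.filter (fun b => Fin.lastCases i₀ τ b = i), w b)
        = (∑ b : Fin m, if τ b = i then w b.castSucc else 0)
          + (if i₀ = i then w (Fin.last m) else 0) := by
      rw [Finset.sum_filter, Fin.sum_univ_castSucc]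
      simp [Fin.lastCases_castSucc, Fin.lastCases_last]
    have hloadeq : ∀ j, (∑ b : Fin m, if τ b = j then w b.castSucc else 0) = load j := by
      intro j; simp only [hload, Finset.sum_filter]
    have htot : (∑ b : Fin (m+1), w b)
        = (∑ b : Fin m, w b.castSucc) + w (Fin.last m) := Fin.sum_univ_castSucc w
    rw [hconv, hloadeq]
    by_cases hi : i₀ = i
    · subst hi
      simp only [if_pos rfl]
      have := hwC (Fin.last m)
      have : load i₀ + w (Fin.last m) ≤ (∑ b : Fin m, w b.castSucc) / k + w (Fin.last m) := by
        linarith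
      calc load i₀ + w (Fin.last m)
          ≤ (∑ b : Fin m, w b.castSucc) / k + w (Fin.last m) := this
        _ ≤ (∑ b : Fin (m+1), w b) / k + C := by
            rw [htot]
            have h1 : (∑ b : Fin m, w b.castSucc) / k
                ≤ ((∑ b : Fin m, w b.castSucc) + w (Fin.last m)) / k := by
              gcongr
              linarith [hw0 (Fin.last m)]
            linarith [hwC (Fin.last m)]
    · rw [if_neg hi, add_zero]
      calc load i ≤ (∑ b : Fin m, w b.castSucc) / k + C := hτ i
        _ ≤ (∑ b : Fin (m+1), w b) / k + C := by
            rw [htot]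
            have : (∑ b : Fin m, w b.castSucc) / k
                ≤ ((∑ b : Fin m, w b.castSucc) + w (Fin.last m)) / k := by
              gcongr
              linarith [hw0 (Fin.last m)]
            linarith

theorem stmt4 (ε T : ℝ) (hε : 0 < ε) (hε1 : ε < 1 / 100) (hT : 0 < T)
    (n : ℕ) (p : Fin n → ℝ) (hp : ∀ j, 0 < p j)
    (k : ℕ) (hk : 0 < k) (hkP : ε * (∑ j, p j) / (2 * T) < (k : ℝ))
    (m : ℕ) (σ : Fin n → Fin m) (P' : Fin m → ℝ)
    (hP'ge : ∀ b : Fin m, (∑ j ∈ Finset.univ.filter (fun j => σ j = b), p j) ≤ P' b)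
    (hP'le : ∀ b : Fin m, P' b ≤ 2 * T)
    (hsum : ∑ b, P' b ≤ (∑ j, p j) / ε) :
    ∃ τ : Fin m → Fin k, ∀ i : Fin k,
      (∑ b ∈ Finset.univ.filter (fun b => τ b = i), P' b) ≤ (3 / ε ^ 2) * T := by
  have hP'0 : ∀ b, 0 ≤ P' b := fun b =>
    le_trans (Finset.sum_nonneg fun j _ => (hp j).le) (hP'ge b)
  obtain ⟨τ, hτ⟩ := list_sched k hk (2 * T) (by linarith) m P' hP'0 hP'le
  refine ⟨τ, fun i => ?_⟩
  have hkpos : (0 : ℝ) < k := by exact_mod_cast hk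
  have h1 : (∑ b, P' b) / k ≤ ((∑ j, p j) / ε) / k := by
    gcongr
  have hP : ε * (∑ j, p j) < 2 * T * k := by
    have := (div_lt_iff₀ (by linarith : (0:ℝ) < 2 * T)).mp hkP
    linarith
  have h2 : ((∑ j, p j) / ε) / k < 2 * T / ε ^ 2 := by
    rw [div_div, div_lt_div_iff₀ (by positivity) (by positivity)]
    nlinarith
  have h3 : 2 * T / ε ^ 2 + 2 * T ≤ (3 / ε ^ 2) * T := by
    rw [div_mul_eq_mul_div, div_add' _ _ _ (by positivity),
      div_le_div_iff₀ (by positivity : (0:ℝ) < ε ^ 2) (by positivity : (0:ℝ) < ε ^ 2)]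
    have hε2 : ε ^ 2 ≤ 1 / 2 := by nlinarith
    have hx : (0:ℝ) ≤ T * ε ^ 2 := by positivity
    nlinarith [mul_le_mul_of_nonneg_left hε2 hx]
  calc (∑ b ∈ Finset.univ.filter (fun b => τ b = i), P' b)
      ≤ (∑ b, P' b) / k + 2 * T := hτ i
    _ ≤ ((∑ j, p j) / ε) / k + 2 * T := by linarith
    _ ≤ (3 / ε ^ 2) * T := by linarith
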